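/- For so(2m+1,C) with m ≥ 2, the Weyl dimension formula gives dim(F ⊠ Λ²F ⊠ S) = ((m+1)·m·(m−1)·2^{m+3})/3, where the highest weight is (2+1/2, 1+1/2, 1/2, …, 1/2). -/

import Mathlib

open Finset in
private lemma cast_descFactorial_prod (c d : ℕ) (h : d ≤ c) :
    ∏ t ∈ Finset.range d, ((c : ℚ) - (t : ℕ)) = (c.descFactorial d : ℚ) := by
  rw [Nat.descFactorial_eq_prod_range, Nat.cast_prod]
  refine Finset.prod_congr rfl fun t ht => ?_
  rw [Nat.cast_sub ((Finset.mem_range.mp ht).le.trans h)]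

private lemma descB (a b k : ℕ) (hab : a = b + 1) (hk : k ≤ b) :
    ((b:ℚ) + 1 - k) * (a.descFactorial k : ℚ) = ((b:ℚ) + 1) * (b.descFactorial k : ℚ) := by
  subst hab
  have key : (b + 1 - k) * (b + 1).descFactorial k = (b + 1) * b.descFactorial k := by
    rw [← Nat.descFactorial_succ, Nat.succ_descFactorial_succ]
  have h2 := congrArg (Nat.cast : ℕ → ℚ) key
  push_cast [Nat.cast_sub (show k ≤ b + 1 by omega)] at h2
  linear_combination h2

private lemma prod_Ioi_eq (m : ℕ) (i : Fin m) (F : ℕ → ℚ) :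
    ∏ j ∈ Finset.Ioi i, F j.val = ∏ t ∈ Finset.range (m - (i.val + 1)), F (i.val + 1 + t) := by
  have h1 : ∏ j ∈ Finset.Ioi i, F j.val
      = ∏ x ∈ (Finset.Ioi i).map Fin.valEmbedding, F x := by
    rw [Finset.prod_map]; rfl
  rw [h1, Fin.map_valEmbedding_Ioi]
  have h2 : Finset.Ioo i.val m = Finset.Ico (i.val+1) m := by
    ext x
    simp only [Finset.mem_Ioo, Finset.mem_Ico]
    have := i.isLt
    omega
  rw [h2, Finset.prod_Ico_eq_prod_range]

private lemma prod_add_two (d : ℕ) :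
    ∏ t ∈ Finset.range d, ((t:ℚ)+2) = (∏ t ∈ Finset.range d, ((t:ℚ)+1)) * ((d:ℚ)+1) := by
  induction d with
  | zero => simp
  | succ n ih => rw [Finset.prod_range_succ, Finset.prod_range_succ, ih]; push_cast; ring

private lemma prod_add_four (d : ℕ) :
    ∏ t ∈ Finset.range d, ((t:ℚ)+4)
      = (∏ t ∈ Finset.range d, ((t:ℚ)+1)) * (((d:ℚ)+1)*((d:ℚ)+2)*((d:ℚ)+3)/6) := by
  induction d with
  | zero => norm_num
  | succ n ih => rw [Finset.prod_range_succ, Finset.prod_range_succ, ih]; push_cast; ring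

/-- The lowest form `ρ = (m−1/2, m−3/2, …, 3/2, 1/2)` of `so(2m+1,ℂ)`. -/
noncomputable def rhoB (m : ℕ) : Fin m → ℚ := fun i => (m : ℚ) - 1/2 - (i : ℕ)

/-- The highest weight `(2+1/2, 1+1/2, 1/2, …, 1/2)` of `F ⊠ Λ²F ⊠ S` for `so(2m+1,ℂ)`. -/
noncomputable def lamFL2B (m : ℕ) : Fin m → ℚ :=
  fun i => if (i : ℕ) = 0 then 2 + 1/2 else if (i : ℕ) = 1 then 1 + 1/2 else 1/2

/-- `λ + ρ` as a function of the (natural-number) index. -/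
noncomputable def AVB (m : ℕ) : ℕ → ℚ := fun v =>
  (if v = 0 then 2 + 1/2 else if v = 1 then 1 + 1/2 else 1/2) + ((m:ℚ) - 1/2 - v)

/-- `ρ` as a function of the (natural-number) index. -/
noncomputable def BVB (m : ℕ) : ℕ → ℚ := fun v => (m:ℚ) - 1/2 - v

open Finset in
/-- For `so(2m+1,ℂ)`, `m ≥ 2`, the Weyl dimension formula (with
`Φ⁺ = {e_i ± e_j : i < j} ∪ {e_i}`, `ρ = (m−1/2, …, 1/2)`) gives
`dim(F ⊠ Λ²F ⊠ S) = ((m+1)·m·(m−1)·2^{m+3})/3` for the highest weight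
`(2+1/2, 1+1/2, 1/2, …, 1/2)`. -/
theorem weyl_dim_F_L2F_spin_odd (m : ℕ) (hm : 2 ≤ m) :
    ((∏ i : Fin m, ∏ j ∈ Finset.Ioi i,
        ((lamFL2B m i + rhoB m i) - (lamFL2B m j + rhoB m j))
          * ((lamFL2B m i + rhoB m i) + (lamFL2B m j + rhoB m j)))
        * ∏ i : Fin m, (lamFL2B m i + rhoB m i))
      / ((∏ i : Fin m, ∏ j ∈ Finset.Ioi i, (rhoB m i - rhoB m j) * (rhoB m i + rhoB m j))
        * ∏ i : Fin m, rhoB m i)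
      = ((m : ℚ) + 1) * (m : ℚ) * ((m : ℚ) - 1) * (2 : ℚ) ^ (m + 3) / 3 := by
  obtain ⟨k, rfl⟩ : ∃ k, m = k + 2 := ⟨m - 2, by omega⟩
  set m := k + 2 with hmk
  set c : Fin m → ℚ := fun i =>
    if (i : ℕ) = 0 then 8*((k:ℚ)+2)*((k:ℚ)+3)/3
    else if (i : ℕ) = 1 then 4*((k:ℚ)+1) else 2 with hc
  have hmQ : (m:ℚ) = (k:ℚ) + 2 := by rw [hmk]; push_cast; ring
  have key : ∀ i : Fin m,
      (∏ j ∈ Finset.Ioi i,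
        ((lamFL2B m i + rhoB m i) - (lamFL2B m j + rhoB m j))
          * ((lamFL2B m i + rhoB m i) + (lamFL2B m j + rhoB m j)))
        * (lamFL2B m i + rhoB m i)
      = c i * ((∏ j ∈ Finset.Ioi i, (rhoB m i - rhoB m j) * (rhoB m i + rhoB m j))
          * rhoB m i) := by
    intro i
    have hAV : ∀ j : Fin m, lamFL2B m j + rhoB m j = AVB m j.val := fun _ => rfl
    have hBV : ∀ j : Fin m, rhoB m j = BVB m j.val := fun _ => rfl
    simp only [hAV]
    simp only [hBV]
    rw [prod_Ioi_eq m i (fun v => (AVB m i.val - AVB m v) * (AVB m i.val + AVB m v)),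
        prod_Ioi_eq m i (fun v => (BVB m i.val - BVB m v) * (BVB m i.val + BVB m v))]
    by_cases h0 : (i : ℕ) = 0
    · -- i = 0
      have hci : c i = 8*((k:ℚ)+2)*((k:ℚ)+3)/3 := by rw [hc]; simp [h0]
      simp only [h0]
      rw [show m - (0 + 1) = k + 1 by omega]
      rw [Finset.prod_range_succ', Finset.prod_range_succ']
      have eA : ∀ t ∈ Finset.range k,
          (AVB m 0 - AVB m (0+1+(t+1))) * (AVB m 0 + AVB m (0+1+(t+1)))
            = ((t:ℚ)+4) * (((2*k+4:ℕ):ℚ) - (t:ℕ)) := by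
        intro t ht
        have hj0 : ¬(0+1+(t+1) = 0) := by omega
        have hj1 : ¬(0+1+(t+1) = 1) := by omega
        simp only [AVB, if_neg hj0, if_neg hj1, if_pos rfl]
        push_cast
        rw [hmQ]
        ring
      have eB : ∀ t ∈ Finset.range k,
          (BVB m 0 - BVB m (0+1+(t+1))) * (BVB m 0 + BVB m (0+1+(t+1)))
            = ((t:ℚ)+2) * (((2*k+1:ℕ):ℚ) - (t:ℕ)) := by
        intro t ht
        simp only [BVB]
        push_cast
        rw [hmQ]
        ring
      have hA0 : (AVB m 0 - AVB m (0+1+0)) * (AVB m 0 + AVB m (0+1+0)) = 4*(k:ℚ)+12 := by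
        norm_num [AVB]
        rw [hmQ]
        ring
      have hB0 : (BVB m 0 - BVB m (0+1+0)) * (BVB m 0 + BVB m (0+1+0)) = 2*(k:ℚ)+2 := by
        norm_num [BVB]
        rw [hmQ]
        ring
      have hAi : AVB m 0 = (k:ℚ) + 4 := by norm_num [AVB]; rw [hmQ]; ring
      have hBi : BVB m 0 = (k:ℚ) + 3/2 := by norm_num [BVB]; rw [hmQ]; ring
      rw [Finset.prod_congr rfl eA, Finset.prod_congr rfl eB,
        Finset.prod_mul_distrib, Finset.prod_mul_distrib,
        prod_add_four k, prod_add_two k,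
        cast_descFactorial_prod (2*k+4) k (by omega),
        cast_descFactorial_prod (2*k+1) k (by omega),
        hA0, hB0, hAi, hBi, hci]
      have HB3 := descB (2*k+4) (2*k+3) k (by omega) (by omega)
      have HB2 := descB (2*k+3) (2*k+2) k (by omega) (by omega)
      have HB1 := descB (2*k+2) (2*k+1) k (by omega) (by omega)
      push_cast at HB1 HB2 HB3 ⊢
      linear_combination (2/3*(∏ t ∈ Finset.range k, ((t:ℚ)+1))*((k:ℚ)+1)*((k:ℚ)+3)) *
        (((k:ℚ)+3)*((k:ℚ)+2)*HB3 + (2*(k:ℚ)+4)*((k:ℚ)+2)*HB2 + (2*(k:ℚ)+4)*(2*(k:ℚ)+3)*HB1)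
    · by_cases h1 : (i : ℕ) = 1
      · -- i = 1
        have hci : c i = 4*((k:ℚ)+1) := by rw [hc]; simp [h1]
        simp only [h1]
        rw [show m - (1 + 1) = k by omega]
        have eA : ∀ t ∈ Finset.range k,
            (AVB m 1 - AVB m (1+1+t)) * (AVB m 1 + AVB m (1+1+t))
              = ((t:ℚ)+2) * (((2*k+2:ℕ):ℚ) - (t:ℕ)) := by
          intro t ht
          have hj0 : ¬(1+1+t = 0) := by omega
          have hj1 : ¬(1+1+t = 1) := by omega
          simp only [AVB, if_neg hj0, if_neg hj1, if_neg one_ne_zero, if_pos rfl]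
          push_cast
          rw [hmQ]
          ring
        have eB : ∀ t ∈ Finset.range k,
            (BVB m 1 - BVB m (1+1+t)) * (BVB m 1 + BVB m (1+1+t))
              = ((t:ℚ)+1) * (((2*k:ℕ):ℚ) - (t:ℕ)) := by
          intro t ht
          simp only [BVB]
          push_cast
          rw [hmQ]
          ring
        have hAi : AVB m 1 = (k:ℚ) + 2 := by norm_num [AVB]; rw [hmQ]; ring
        have hBi : BVB m 1 = (k:ℚ) + 1/2 := by norm_num [BVB]; rw [hmQ]; ring
        rw [Finset.prod_congr rfl eA, Finset.prod_congr rfl eB,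
          Finset.prod_mul_distrib, Finset.prod_mul_distrib,
          prod_add_two k,
          cast_descFactorial_prod (2*k+2) k (by omega),
          cast_descFactorial_prod (2*k) k (by omega),
          hAi, hBi, hci]
        have HB2 := descB (2*k+2) (2*k+1) k (by omega) (by omega)
        have HB1 := descB (2*k+1) (2*k) k (by omega) (by omega)
        push_cast at HB1 HB2 ⊢
        linear_combination ((∏ t ∈ Finset.range k, ((t:ℚ)+1))*((k:ℚ)+1)) * HB2
          + (2*(∏ t ∈ Finset.range k, ((t:ℚ)+1))*((k:ℚ)+1)) * HB1
      · -- general case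
        have hci : c i = 2 := by rw [hc]; simp [h0, h1]
        obtain ⟨d, hd⟩ : ∃ d, m = i.val + 1 + d := ⟨m - (i.val+1), by have := i.isLt; omega⟩
        have hkQ : (k:ℚ) = (i.val:ℚ) + (d:ℚ) - 1 := by
          have h' := congrArg (Nat.cast (R:=ℚ)) hd
          push_cast at h'
          linarith
        rw [show m - (i.val + 1) = d by omega]
        have hmQ' : (m:ℚ) = (i.val:ℚ) + 1 + (d:ℚ) := by
          exact_mod_cast congrArg (Nat.cast (R:=ℚ)) hd
        have eA : ∀ t ∈ Finset.range d,
            (AVB m i.val - AVB m (i.val+1+t)) * (AVB m i.val + AVB m (i.val+1+t))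
              = ((t:ℚ)+1) * (((2*d+1:ℕ):ℚ) - (t:ℕ)) := by
          intro t ht
          have hj0 : ¬(i.val+1+t = 0) := by omega
          have hj1 : ¬(i.val+1+t = 1) := by omega
          simp only [AVB, if_neg hj0, if_neg hj1, if_neg h0, if_neg h1]
          push_cast
          rw [hmQ']
          ring
        have eB : ∀ t ∈ Finset.range d,
            (BVB m i.val - BVB m (i.val+1+t)) * (BVB m i.val + BVB m (i.val+1+t))
              = ((t:ℚ)+1) * (((2*d:ℕ):ℚ) - (t:ℕ)) := by
          intro t ht
          simp only [BVB]
          push_cast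
          rw [hmQ']
          ring
        have hAi : AVB m i.val = (d:ℚ) + 1 := by
          simp only [AVB, if_neg h0, if_neg h1]; rw [hmQ']; ring
        have hBi : BVB m i.val = (d:ℚ) + 1/2 := by
          simp only [BVB]; rw [hmQ']; ring
        rw [Finset.prod_congr rfl eA, Finset.prod_congr rfl eB,
          Finset.prod_mul_distrib, Finset.prod_mul_distrib,
          cast_descFactorial_prod (2*d+1) d (by omega),
          cast_descFactorial_prod (2*d) d (by omega),
          hAi, hBi, hci]
        have HB := descB (2*d+1) (2*d) d rfl (by omega)
        push_cast at HB ⊢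
        linear_combination (∏ t ∈ Finset.range d, ((t:ℚ)+1)) * HB
  have hDpos : ∀ i ∈ (Finset.univ : Finset (Fin m)),
      0 < (∏ j ∈ Finset.Ioi i, (rhoB m i - rhoB m j) * (rhoB m i + rhoB m j)) * rhoB m i := by
    intro i _
    have hi : (i : ℚ) + 1 ≤ (m : ℚ) := by exact_mod_cast i.isLt
    apply mul_pos
    · apply Finset.prod_pos
      intro j hj
      have hij : (i : ℚ) < (j : ℚ) := by exact_mod_cast (Finset.mem_Ioi.mp hj)
      have hjm : (j : ℚ) + 1 ≤ (m : ℚ) := by exact_mod_cast j.isLt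
      apply mul_pos
      · simp only [rhoB]; linarith
      · simp only [rhoB]; linarith
    · simp only [rhoB]; linarith
  rw [← Finset.prod_mul_distrib, ← Finset.prod_mul_distrib,
    Finset.prod_congr rfl (fun i _ => key i), Finset.prod_mul_distrib, mul_div_assoc,
    div_self (ne_of_gt (Finset.prod_pos hDpos)), mul_one]
  rw [Fin.prod_univ_succ, Fin.prod_univ_succ]
  have h0 : c 0 = 8*((k:ℚ)+2)*((k:ℚ)+3)/3 := by simp [hc]
  have h1 : c (Fin.succ 0) = 4*((k:ℚ)+1) := by simp [hc, hmk]
  have h2 : ∀ i : Fin k, c (Fin.succ (Fin.succ i)) = 2 := by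
    intro i; simp [hc, Fin.val_succ]
  rw [h0, h1, Finset.prod_congr rfl (fun i _ => h2 i), Finset.prod_const]
  simp only [Finset.card_univ, Fintype.card_fin]
  rw [show m + 3 = k + 5 by omega, pow_add, hmQ]
  ring
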